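/- arXiv:1911.04694 — 2 statements merged into one kernel-verified Lean document; each statement's English description precedes it below -/
import Mathlib

section
/- If H is a standard normal random variable and P_p > 0, then E[Q(√P_p·|H|)] = 1/2 − arctan(√P_p)/π, where Q is the Gaussian tail function. -/
open MeasureTheory ProbabilityTheory Real Set Filter

noncomputable def gaussQ (x : ℝ) : ℝ :=
  ∫ t in Set.Ioi x, (1 / Real.sqrt (2 * Real.pi)) * Real.exp (-t ^ 2 / 2)

noncomputable def gphi (x : ℝ) : ℝ := (1 / Real.sqrt (2 * Real.pi)) * Real.exp (-x ^ 2 / 2)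

lemma gphi_cont : Continuous gphi := by
  unfold gphi; fun_prop

lemma gphi_nonneg (x : ℝ) : 0 ≤ gphi x :=
  mul_nonneg (by positivity) (Real.exp_nonneg _)

lemma gphi_eq (x : ℝ) : gphi x = (1 / Real.sqrt (2 * Real.pi)) * Real.exp (-(1/2) * x ^ 2) := by
  unfold gphi; ring_nf

lemma gphi_integrable : Integrable gphi := by
  have : Integrable (fun x : ℝ => Real.exp (-(1/2) * x ^ 2)) :=
    integrable_exp_neg_mul_sq (by norm_num)
  have h2 := this.const_mul (1 / Real.sqrt (2 * Real.pi))
  apply h2.congr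
  filter_upwards with x
  rw [gphi_eq]

lemma int_mul_exp {b : ℝ} (hb : 0 < b) :
    ∫ x in Ioi (0:ℝ), x * Real.exp (-b * x ^ 2) = 1 / (2 * b) := by
  have A : ∀ x ∈ Ici (0:ℝ), HasDerivAt (fun x => -(2*b)⁻¹ * Real.exp (-b * x ^ 2))
      (x * Real.exp (-b * x ^ 2)) x := by
    intro x _
    have := ((hasDerivAt_pow 2 x).const_mul (-b)).exp.const_mul (-(2*b)⁻¹)
    refine this.congr_deriv ?_
    field_simp
    ring
  have B : Tendsto (fun x : ℝ => -(2*b)⁻¹ * Real.exp (-b * x ^ 2)) atTop (nhds (-(2*b)⁻¹ * 0)) := by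
    refine Tendsto.const_mul _ ?_
    refine Real.tendsto_exp_atBot.comp ?_
    exact (tendsto_pow_atTop two_ne_zero).const_mul_atTop_of_neg (neg_lt_zero.2 hb)
  have C : IntegrableOn (fun x : ℝ => x * Real.exp (-b * x ^ 2)) (Ioi 0) :=
    (integrable_mul_exp_neg_mul_sq hb).integrableOn
  have := integral_Ioi_of_hasDerivAt_of_tendsto' A C B
  rw [this]
  field_simp
  simp

lemma gaussQ_eq (x : ℝ) : gaussQ x = ∫ t in Ioi x, gphi t := rfl

lemma gaussQ_sub {a h : ℝ} (hh : 0 < h) :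
    gaussQ (a * h) = ∫ s in Ioi a, h * gphi (h * s) := by
  rw [MeasureTheory.integral_const_mul, integral_comp_mul_left_Ioi gphi a hh,
    smul_eq_mul, ← mul_assoc, mul_inv_cancel₀ hh.ne', one_mul, gaussQ_eq, mul_comm h a]

lemma gaussQ_nonneg (x : ℝ) : 0 ≤ gaussQ x := by
  rw [gaussQ_eq]; exact integral_nonneg fun t => gphi_nonneg t

lemma gaussQ_le (x : ℝ) : gaussQ x ≤ ∫ t, gphi t := by
  rw [gaussQ_eq]
  exact setIntegral_le_integral gphi_integrable (Filter.Eventually.of_forall gphi_nonneg)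

lemma gphi_abs (x : ℝ) : gphi |x| = gphi x := by
  unfold gphi; rw [sq_abs]

theorem expected_Q_abs_gaussian (Pp : ℝ) (hPp : 0 < Pp) :
    ∫ h, gaussQ (Real.sqrt Pp * |h|) ∂(gaussianReal 0 1)
      = 1 / 2 - Real.arctan (Real.sqrt Pp) / Real.pi := by
  set a := Real.sqrt Pp with ha_def
  have ha : 0 < a := Real.sqrt_pos.2 hPp
  -- Step 1: density
  have h1 : ∫ h, gaussQ (a * |h|) ∂(gaussianReal 0 1)
      = ∫ h, gphi h * gaussQ (a * |h|) := by
    rw [gaussianReal_of_var_ne_zero _ one_ne_zero]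
    have hd : gaussianPDF 0 1 = fun x => ((gaussianPDFReal 0 1 x).toNNReal : ENNReal) := rfl
    rw [hd, integral_withDensity_eq_integral_smul ((measurable_gaussianPDFReal 0 1).real_toNNReal)]
    congr 1; ext x
    rw [NNReal.smul_def, Real.coe_toNNReal _ (gaussianPDFReal_nonneg 0 1 x)]
    congr 1
    unfold gaussianPDFReal gphi
    norm_num
  -- Step 2: evenness
  have h2 : ∫ h, gphi h * gaussQ (a * |h|) = 2 * ∫ h in Ioi 0, gphi h * gaussQ (a * h) := by
    have he : ∀ h : ℝ, gphi h * gaussQ (a * |h|) = (fun x => gphi x * gaussQ (a * x)) |h| := by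
      intro h; simp only [gphi_abs]
    simp_rw [he]
    exact integral_comp_abs (f := fun x => gphi x * gaussQ (a * x))
  -- Step 3: substitution inside
  have h3 : ∫ h in Ioi 0, gphi h * gaussQ (a * h)
      = ∫ h in Ioi 0, ∫ s in Ioi a, gphi h * (h * gphi (h * s)) := by
    refine setIntegral_congr_fun measurableSet_Ioi (fun h hh => ?_)
    rw [MeasureTheory.integral_const_mul, gaussQ_sub hh]
  -- continuity/measurability of the double integrand
  have hF_cont : Continuous (fun p : ℝ × ℝ => gphi p.1 * (p.1 * gphi (p.1 * p.2))) := by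
    unfold gphi; fun_prop
  -- Step 4: Fubini
  set C := ∫ t, gphi t with hC
  have hint : Integrable (fun p : ℝ × ℝ => gphi p.1 * (p.1 * gphi (p.1 * p.2)))
      ((volume.restrict (Ioi (0:ℝ))).prod (volume.restrict (Ioi a))) := by
    rw [MeasureTheory.integrable_prod_iff hF_cont.aestronglyMeasurable]
    constructor
    · filter_upwards [ae_restrict_mem measurableSet_Ioi] with h hh
      have hg : Integrable (fun s => gphi (h * s)) :=
        (integrable_comp_mul_left_iff gphi (ne_of_gt hh)).2 gphi_integrable
      exact ((hg.integrableOn.const_mul h).const_mul (gphi h))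
    · -- integrability of h ↦ ∫_{Ioi a} ‖F (h,s)‖ ds
      refine Integrable.mono' (g := fun h => C * gphi h)
        ((gphi_integrable.const_mul C).integrableOn)
        ((hF_cont.norm.stronglyMeasurable.integral_prod_right').aestronglyMeasurable) ?_
      filter_upwards [ae_restrict_mem measurableSet_Ioi] with h hh
      have hnn : ∀ s ∈ Ioi a, ‖gphi h * (h * gphi (h * s))‖ = gphi h * (h * gphi (h * s)) := by
        intro s _
        exact Real.norm_of_nonneg (mul_nonneg (gphi_nonneg h)
          (mul_nonneg (le_of_lt hh) (gphi_nonneg _)))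
      rw [setIntegral_congr_fun measurableSet_Ioi hnn]
      have : ∫ s in Ioi a, gphi h * (h * gphi (h * s)) = gphi h * gaussQ (a * h) := by
        rw [MeasureTheory.integral_const_mul, ← gaussQ_sub hh]
      rw [Real.norm_of_nonneg, this]
      · calc gphi h * gaussQ (a * h) ≤ gphi h * C :=
              mul_le_mul_of_nonneg_left (gaussQ_le _) (gphi_nonneg h)
          _ = C * gphi h := mul_comm _ _
      · rw [this]
        exact mul_nonneg (gphi_nonneg h) (gaussQ_nonneg _)
  have h4 : ∫ h in Ioi (0:ℝ), ∫ s in Ioi a, gphi h * (h * gphi (h * s))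
      = ∫ s in Ioi a, ∫ h in Ioi (0:ℝ), gphi h * (h * gphi (h * s)) :=
    integral_integral_swap hint
  have h5 : ∀ s : ℝ, ∫ h in Ioi (0:ℝ), gphi h * (h * gphi (h * s))
      = (1 / (2 * π)) * (1 + s ^ 2)⁻¹ := by
    intro s
    have hb : 0 < (1 + s ^ 2) / 2 := by positivity
    have key : ∀ h : ℝ, gphi h * (h * gphi (h * s))
        = (1 / (2 * π)) * (h * Real.exp (-((1 + s ^ 2) / 2) * h ^ 2)) := by
      intro h
      have hs2 : (1 / Real.sqrt (2*π)) * (1 / Real.sqrt (2*π)) = 1 / (2*π) := by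
        rw [div_mul_div_comm, one_mul, Real.mul_self_sqrt (by positivity)]
      have he : Real.exp (-h^2/2) * Real.exp (-(h*s)^2/2)
          = Real.exp (-((1+s^2)/2) * h^2) := by
        rw [← Real.exp_add]; congr 1; ring
      calc gphi h * (h * gphi (h*s))
          = ((1 / Real.sqrt (2*π)) * (1 / Real.sqrt (2*π)))
              * (h * (Real.exp (-h^2/2) * Real.exp (-(h*s)^2/2))) := by unfold gphi; ring
        _ = _ := by rw [hs2, he]
    simp_rw [key]
    rw [MeasureTheory.integral_const_mul, int_mul_exp hb,
      show 2 * ((1+s^2)/2) = 1+s^2 by ring, one_div, one_div]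
  rw [h1, h2, h3, h4]
  simp_rw [h5]
  rw [MeasureTheory.integral_const_mul, integral_Ioi_inv_one_add_sq]
  have hpi : (π : ℝ) ≠ 0 := Real.pi_ne_zero
  field_simp
end

section
/- If 0 < p < 1/2 and β > 0, then ∑_{k=0}^{⌊L/2⌋} C(L,k)·p^k·(1−p)^{L−k}·e^{−β²(L−2k)²/2} → 0 as L → ∞. -/
open Filter

lemma aux_choose_le_two_pow (n k : ℕ) : n.choose k ≤ 2 ^ n := by
  rcases le_or_gt k n with h | h
  · calc n.choose k ≤ ∑ m ∈ Finset.range (n + 1), n.choose m :=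
          Finset.single_le_sum (fun i _ => Nat.zero_le _)
            (Finset.mem_range.2 (Nat.lt_succ_of_le h))
      _ = 2 ^ n := Nat.sum_range_choose n
  · simp [Nat.choose_eq_zero_of_lt h]

theorem binomial_half_sum_with_gaussian_weight_tendsto_zero
    (p β : ℝ) (hp : 0 < p) (hp' : p < 1 / 2) (hβ : 0 < β) :
    Tendsto (fun L : ℕ =>
        ∑ k ∈ Finset.range (L / 2 + 1),
          (L.choose k : ℝ) * p ^ k * (1 - p) ^ (L - k) *
            Real.exp (-β ^ 2 * ((L : ℝ) - 2 * k) ^ 2 / 2))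
      atTop (nhds 0) := by
  set q : ℝ := 1 - p with hq
  set ρ : ℝ := Real.sqrt ((1 + 4 * p * q) / 2) with hρdef
  set a : ℝ := Real.log (2 * q / ρ) with ha
  set Cc : ℝ := Real.exp (a ^ 2 / (2 * β ^ 2)) with hCc
  clear_value Cc a ρ q
  have hq0 : 0 < q := by rw [hq]; linarith
  have hr0 : 0 < 4 * p * q := by positivity
  have hr1 : 4 * p * q < 1 := by rw [hq]; nlinarith [sq_nonneg (1 - 2 * p)]
  have hρsq : ρ ^ 2 = (1 + 4 * p * q) / 2 := by
    rw [hρdef]; exact Real.sq_sqrt (by linarith)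
  have hρ0 : 0 < ρ := by rw [hρdef]; exact Real.sqrt_pos.mpr (by linarith)
  have hρ1 : ρ < 1 := by
    rw [hρdef]
    exact (Real.sqrt_lt' one_pos).mpr (by nlinarith)
  have hCc0 : 0 < Cc := by rw [hCc]; exact Real.exp_pos _
  -- key per-m bound
  have key : ∀ m : ℕ, (2 * q) ^ m * Real.exp (-β ^ 2 * (m : ℝ) ^ 2 / 2) ≤ Cc * ρ ^ m := by
    intro m
    have h1 : (2 * q) ^ m = Real.exp (a * m) * ρ ^ m := by
      have h2 : (2 * q) = Real.exp a * ρ := by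
        rw [ha, Real.exp_log (div_pos (by linarith) hρ0)]
        field_simp
      rw [h2, mul_pow, mul_comm a (m : ℝ), Real.exp_nat_mul]
    rw [h1]
    have h3 : Real.exp (a * m) * Real.exp (-β ^ 2 * (m : ℝ) ^ 2 / 2) ≤ Cc := by
      rw [← Real.exp_add, hCc]
      apply Real.exp_le_exp.mpr
      rw [le_div_iff₀ (by positivity : (0:ℝ) < 2 * β ^ 2)]
      nlinarith [sq_nonneg (a - β ^ 2 * (m : ℝ))]
    calc Real.exp (a * m) * ρ ^ m * Real.exp (-β ^ 2 * (m : ℝ) ^ 2 / 2)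
        = (Real.exp (a * m) * Real.exp (-β ^ 2 * (m : ℝ) ^ 2 / 2)) * ρ ^ m := by ring
      _ ≤ Cc * ρ ^ m := mul_le_mul_of_nonneg_right h3 (pow_nonneg hρ0.le m)
  -- per-term bound
  have termb : ∀ L k : ℕ, k ∈ Finset.range (L / 2 + 1) →
      (L.choose k : ℝ) * p ^ k * q ^ (L - k) *
        Real.exp (-β ^ 2 * ((L : ℝ) - 2 * k) ^ 2 / 2) ≤ Cc * ρ ^ L := by
    intro L k hk
    have hk' : 2 * k ≤ L := by
      have := Finset.mem_range.1 hk; omega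
    set m : ℕ := L - 2 * k with hmdef
    have hm : L = 2 * k + m := by omega
    have hLk : L - k = k + m := by omega
    have hcast : ((L : ℝ) - 2 * k) = (m : ℝ) := by
      have : (L : ℝ) = 2 * k + m := by exact_mod_cast hm
      rw [this]; ring
    have hch : (L.choose k : ℝ) ≤ 2 ^ L := by
      exact_mod_cast Nat.cast_le.mpr (aux_choose_le_two_pow L k)
    have h2L : (2 : ℝ) ^ L = 4 ^ k * 2 ^ m := by
      rw [hm, pow_add, pow_mul]; norm_num
    calc (L.choose k : ℝ) * p ^ k * q ^ (L - k) *
          Real.exp (-β ^ 2 * ((L : ℝ) - 2 * k) ^ 2 / 2)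
        = (L.choose k : ℝ) * ((p * q) ^ k * q ^ m) *
            Real.exp (-β ^ 2 * (m : ℝ) ^ 2 / 2) := by
          rw [hcast, hLk, pow_add, mul_pow]; ring
      _ ≤ (2 : ℝ) ^ L * ((p * q) ^ k * q ^ m) *
            Real.exp (-β ^ 2 * (m : ℝ) ^ 2 / 2) := by
          apply mul_le_mul_of_nonneg_right _ (Real.exp_pos _).le
          exact mul_le_mul_of_nonneg_right hch
            (mul_nonneg (pow_nonneg (mul_nonneg hp.le hq0.le) k) (pow_nonneg hq0.le m))
      _ = (4 * p * q) ^ k * ((2 * q) ^ m * Real.exp (-β ^ 2 * (m : ℝ) ^ 2 / 2)) := by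
          rw [h2L,
            show (4 * p * q) ^ k = 4 ^ k * (p * q) ^ k by rw [mul_assoc, mul_pow],
            show (2 * q) ^ m = 2 ^ m * q ^ m from mul_pow 2 q m]
          ring
      _ ≤ (4 * p * q) ^ k * (Cc * ρ ^ m) :=
          mul_le_mul_of_nonneg_left (key m) (pow_nonneg hr0.le k)
      _ ≤ (ρ ^ 2) ^ k * (Cc * ρ ^ m) := by
          apply mul_le_mul_of_nonneg_right _
            (mul_nonneg hCc0.le (pow_nonneg hρ0.le m))
          exact pow_le_pow_left₀ hr0.le (by rw [hρsq]; linarith) k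
      _ = Cc * ρ ^ L := by rw [← pow_mul, hm, pow_add]; ring
  apply squeeze_zero (g := fun L : ℕ => Cc * ((L : ℝ) + 1) * ρ ^ L)
  · intro L
    apply Finset.sum_nonneg
    intro k _
    exact mul_nonneg (mul_nonneg (mul_nonneg (Nat.cast_nonneg _)
      (pow_nonneg hp.le _)) (pow_nonneg hq0.le _)) (Real.exp_pos _).le
  · intro L
    calc (∑ k ∈ Finset.range (L / 2 + 1),
          (L.choose k : ℝ) * p ^ k * q ^ (L - k) *
            Real.exp (-β ^ 2 * ((L : ℝ) - 2 * k) ^ 2 / 2))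
        ≤ ∑ _k ∈ Finset.range (L / 2 + 1), Cc * ρ ^ L :=
          Finset.sum_le_sum (termb L)
      _ = ((L / 2 + 1 : ℕ) : ℝ) * (Cc * ρ ^ L) := by
          rw [Finset.sum_const, Finset.card_range, nsmul_eq_mul]
      _ ≤ ((L : ℝ) + 1) * (Cc * ρ ^ L) := by
          apply mul_le_mul_of_nonneg_right _
            (mul_nonneg hCc0.le (pow_nonneg hρ0.le L))
          have h5 : (L / 2 + 1 : ℕ) ≤ L + 1 := by omega
          exact_mod_cast Nat.cast_le.mpr h5
      _ = Cc * ((L : ℝ) + 1) * ρ ^ L := by ring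
  · have h1 : Tendsto (fun n : ℕ => (n : ℝ) * ρ ^ n) atTop (nhds 0) :=
      tendsto_self_mul_const_pow_of_lt_one hρ0.le hρ1
    have h2 : Tendsto (fun n : ℕ => ρ ^ n) atTop (nhds 0) :=
      tendsto_pow_atTop_nhds_zero_of_lt_one hρ0.le hρ1
    have h3 := (h1.add h2).const_mul Cc
    simp only [add_zero, mul_zero] at h3
    convert h3 using 2 with L
    ring
end
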